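/- For every n ≥ 0, a_{5,0}(4n+2) = 0; that is, no 5-core partition of an integer congruent to 2 modulo 4 has srank ≡ 0 (mod 4). -/

import Mathlib

open scoped Classical

namespace AndrewsStanley

/-- `O(π)`: the number of odd parts of the partition `π`. -/
def numOdd {n : ℕ} (π : n.Partition) : ℕ := (π.parts.filter (fun j => Odd j)).card

/-- The length of the `i`-th column (`i ≥ 1`) of the Young diagram of `π`,
i.e. the `i`-th part of the conjugate partition `π'`. -/
def colLen {n : ℕ} (π : n.Partition) (i : ℕ) : ℕ := (π.parts.filter (fun j => i ≤ j)).card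

/-- `O(π')`: the number of odd parts of the conjugate partition `π'`.
(All parts of `π` are at most `n`, so all columns of the diagram have index in `[1, n]`.) -/
def numOddConj {n : ℕ} (π : n.Partition) : ℕ :=
  ((Finset.Icc 1 n).filter (fun i => Odd (colLen π i))).card

/-- Stanley's statistic `srank(π) = O(π) - O(π')`. -/
def srank {n : ℕ} (π : n.Partition) : ℤ := (numOdd π : ℤ) - (numOddConj π : ℤ)

/-- A partition has no repeated even parts. -/
def NoRepEven {n : ℕ} (π : n.Partition) : Prop := ∀ j : ℕ, Even j → π.parts.count j ≤ 1

/-- `p_i(N)`: the number of partitions of `N` with `srank ≡ i (mod 4)`. -/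
noncomputable def pMod (i : ℤ) (N : ℕ) : ℕ :=
  (Finset.univ.filter (fun π : N.Partition => srank π % 4 = i)).card

/-- The Andrews–Garvan crank, defined on a multiset of parts: the largest part if there
are no ones, and otherwise the number of parts larger than the number of ones minus
the number of ones. -/
def mcrank (s : Multiset ℕ) : ℤ :=
  if s.count 1 = 0 then (s.sup : ℤ)
  else ((s.filter (fun j => s.count 1 < j)).card : ℤ) - (s.count 1 : ℤ)

/-- The parts of the partition `π₁` in which `j` occurs `⌊f_{2j}(π)/2⌋` times. -/
def halfEvenParts {n : ℕ} (π : n.Partition) : Multiset ℕ :=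
  (Finset.Icc 1 n).val.bind (fun j => Multiset.replicate (π.parts.count (2 * j) / 2) j)

/-- The second largest part `λ₂` of a partition (counted with multiplicity; `0` if
there are fewer than two parts). -/
def secondPart {n : ℕ} (π : n.Partition) : ℕ := (π.parts.erase π.parts.sup).sup

/-- Partitions of type B: either `π = (3,1)`, or `|π| ≠ 4`, `λ₁ - λ₂ ≥ 2`,
`λ'₁ - λ'₂ ≥ 2`, `λ₁ - 2` and `λ₂` are not identical even integers, and `π` has no
repeated even parts. -/
def TypeB {n : ℕ} (π : n.Partition) : Prop :=
  π.parts = {3, 1} ∨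
    (n ≠ 4 ∧ secondPart π + 2 ≤ π.parts.sup ∧ colLen π 2 + 2 ≤ colLen π 1 ∧
      ¬(π.parts.sup = secondPart π + 2 ∧ Even (secondPart π)) ∧ NoRepEven π)

/-- `stcrank(π) = crank(π₁) + srank(π)/2 + Ψ(π)` where `Ψ(π) = 1` iff `π` is of type B. -/
noncomputable def stcrank {n : ℕ} (π : n.Partition) : ℤ :=
  mcrank (halfEvenParts π) + srank π / 2 + (if TypeB π then 1 else 0)

/-- `P_i(k, m, N)`: the number of partitions of `N` with `srank ≡ i (mod 4)` and
`stcrank ≡ k (mod m)`. -/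
noncomputable def Pcount (i k : ℤ) (m : ℕ) (N : ℕ) : ℕ :=
  (Finset.univ.filter
    (fun π : N.Partition => srank π % 4 = i ∧ stcrank π % (m : ℤ) = k)).card

/-- The parts of `π` listed in (weakly) decreasing order. -/
def partsList {n : ℕ} (π : n.Partition) : List ℕ := (π.parts.sort (· ≤ ·)).reverse

/-- `λ_a`, the length of the `a`-th row (`a ≥ 1`) of the Young diagram of `π`. -/
def rowLen {n : ℕ} (π : n.Partition) (a : ℕ) : ℕ := (partsList π).getD (a - 1) 0

/-- The hook length of the cell in row `a` and column `b` (both `1`-indexed). -/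
def hookLen {n : ℕ} (π : n.Partition) (a b : ℕ) : ℕ :=
  (rowLen π a - b) + (colLen π b - a) + 1

/-- A partition is a `t`-core if no hook length of its Young diagram equals `t`. -/
def IsCore (t : ℕ) {n : ℕ} (π : n.Partition) : Prop :=
  ∀ a b : ℕ, 1 ≤ a → 1 ≤ b → b ≤ rowLen π a → hookLen π a b ≠ t

/-- `a_t(N)`: the number of partitions of `N` that are `t`-cores. -/
noncomputable def coreCount (t N : ℕ) : ℕ :=
  (Finset.univ.filter (fun π : N.Partition => IsCore t π)).card

/-- `r_j(π)`: the number of cells in row `a`, column `b` (1-indexed) of the Young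
diagram of `π` with `b - a ≡ j (mod 5)`. -/
noncomputable def rres {n : ℕ} (π : n.Partition) (j : ℕ) : ℕ :=
  ∑ a ∈ Finset.Icc 1 (Multiset.card π.parts),
    ((Finset.Icc 1 (rowLen π a)).filter (fun b => ((b : ℤ) - (a : ℤ)) % 5 = (j : ℤ))).card

/-- The Garvan–Kim–Stanton 5-core crank (as a representative modulo 5):
`d₅(π) = 2 + 2r₀(π) + r₁(π) - r₃(π) - 2r₄(π)`. -/
noncomputable def d5 {n : ℕ} (π : n.Partition) : ℤ :=
  2 + 2 * (rres π 0 : ℤ) + (rres π 1 : ℤ) - (rres π 3 : ℤ) - 2 * (rres π 4 : ℤ)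

/-- `a_{5,i}(N)`: the number of 5-core partitions of `N` with `srank ≡ i (mod 4)`. -/
noncomputable def a5srank (i : ℤ) (N : ℕ) : ℕ :=
  (Finset.univ.filter (fun π : N.Partition => IsCore 5 π ∧ srank π % 4 = i)).card

/-- The infinite product `∏_{j≥0} f j` of power series, in the situation (as for all
the products occurring here) where the factor `f j` is of the form `1 + (terms of
degree > j)`, so that the coefficient of `q^N` in the partial products stabilizes:
it is the corresponding coefficient in `∏_{j ≤ N} f j`. -/
noncomputable def infProd {R : Type*} [CommRing R] (f : ℕ → PowerSeries R) :
    PowerSeries R :=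
  PowerSeries.mk fun N => PowerSeries.coeff N (∏ j ∈ Finset.range (N + 1), f j)



section SrankHelpers

/-! ### Auxiliary lemmas for Statement 18 -/

lemma sum_ind_eq_card (p : ℕ → Prop) [DecidablePred p] (s : Multiset ℕ) :
    (s.map (fun v => if p v then (1:ℕ) else 0)).sum = Multiset.card (s.filter p) := by
  induction s using Multiset.induction_on with
  | empty => simp
  | cons x s ih => by_cases h : p x <;> simp [h, ih, Multiset.filter_cons] <;> omega

lemma downward_closed_eq_range (I : Finset ℕ) (h : ∀ i, i + 1 ∈ I → i ∈ I) :
    I = Finset.range I.card := by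
  have hdc : ∀ d k, k ∈ I → k - d ∈ I := by
    intro d
    induction d with
    | zero => simpa using fun k hk => hk
    | succ d ih =>
      intro k hk
      rcases Nat.eq_zero_or_pos (k - d) with h0 | hpos
      · have : k - (d+1) = 0 := by omega
        rw [this, ← h0]; exact ih k hk
      · have : (k - (d+1)) + 1 = k - d := by omega
        exact h _ (this ▸ ih k hk)
  have hsub : I ⊆ Finset.range I.card := by
    intro k hk
    have hr : Finset.range (k+1) ⊆ I := by
      intro j hj
      simp only [Finset.mem_range] at hj
      have : k - (k - j) = j := by omega
      exact this ▸ hdc (k - j) k hk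
    have := Finset.card_le_card hr
    simp only [Finset.card_range] at this
    simp only [Finset.mem_range]; omega
  exact Finset.eq_of_subset_of_card_le hsub (by simp)

lemma card_even_range (c : ℕ) :
    ((Finset.range c).filter (fun i => Even i)).card = (c+1)/2 ∧
    ((Finset.range c).filter (fun i => ¬ Even i)).card = c/2 := by
  induction c with
  | zero => simp
  | succ c ih =>
    rw [Finset.range_add_one, Finset.filter_insert, Finset.filter_insert]
    rcases Nat.even_or_odd c with h | h
    · rw [if_pos h, if_neg (by simpa using h)]
      rw [Finset.card_insert_of_notMem (by simp)]
      rw [Nat.even_iff] at h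
      omega
    · have h' : ¬ Even c := by rw [Nat.not_even_iff_odd]; exact h
      rw [if_neg h', if_pos h']
      rw [Finset.card_insert_of_notMem (by simp)]
      rw [Nat.odd_iff] at h
      omega

lemma runner_eq (F : Finset ℕ) (hcl : ∀ v ∈ F, 5 ≤ v → v - 5 ∈ F) (r : ℕ) (hr : r < 5) :
    F.filter (fun v => v % 5 = r) =
      (Finset.range (F.filter (fun v => v % 5 = r)).card).image (fun i => 5*i + r) := by
  set Fr := F.filter (fun v => v % 5 = r) with hFr
  have hmem : ∀ v ∈ Fr, v = 5 * (v / 5) + r := by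
    intro v hv
    simp only [hFr, Finset.mem_filter] at hv
    omega
  set I := Fr.image (fun v => v / 5) with hI
  have hinj : Set.InjOn (fun v => v / 5) Fr := by
    intro v hv w hw he
    replace he : v / 5 = w / 5 := he
    rw [hmem v hv, hmem w hw, he]
  have hcardI : I.card = Fr.card := Finset.card_image_of_injOn hinj
  have hIdc : ∀ i, i + 1 ∈ I → i ∈ I := by
    intro i hi
    obtain ⟨v, hv, hvi⟩ := Finset.mem_image.mp hi
    replace hvi : v / 5 = i + 1 := hvi
    have hveq : v = 5*(i+1) + r := by rw [hmem v hv, hvi]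
    have hvF : v ∈ F := (Finset.mem_filter.mp hv).1
    have hv5 : v - 5 ∈ F := hcl v hvF (by omega)
    have hv5r : v - 5 ∈ Fr := by
      simp only [hFr, Finset.mem_filter]
      exact ⟨hv5, by omega⟩
    refine Finset.mem_image.mpr ⟨v - 5, hv5r, by omega⟩
  have hIr : I = Finset.range Fr.card := hcardI ▸ downward_closed_eq_range I hIdc
  calc Fr = Fr.image (fun v => (fun i => 5*i + r) ((fun v => v / 5) v)) := by
        rw [Finset.image_congr (g := id) ?_, Finset.image_id]
        intro v hv
        simp only [id]
        exact (hmem v hv).symm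
  _ = (Fr.image (fun v => v / 5)).image (fun i => 5*i + r) := by rw [Finset.image_image]; rfl
  _ = _ := by rw [← hI, hIr]

lemma filter_even_image_card (c r : ℕ) :
    ((((Finset.range c).image (fun i => 5*i + r)).filter (fun v => Even v)).card)
      = if r % 2 = 0 then (c+1)/2 else c/2 := by
  have hinj : Function.Injective (fun i => 5*i + r) := by intro i j h; simp only at h; omega
  rw [Finset.filter_image, Finset.card_image_of_injective _ hinj]
  rcases Nat.even_or_odd r with h | h
  · rw [if_pos (Nat.even_iff.mp h)]
    rw [Finset.filter_congr (q := fun i => Even i) ?_]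
    · exact (card_even_range c).1
    · intro i _
      rw [Nat.even_iff] at h
      simp only [Nat.even_iff]
      constructor <;> (intro; omega)
  · rw [if_neg (by rw [Nat.odd_iff] at h; omega)]
    rw [Finset.filter_congr (q := fun i => ¬ Even i) ?_]
    · exact (card_even_range c).2
    · intro i _
      rw [Nat.odd_iff] at h
      simp only [Nat.even_iff]
      constructor <;> (intro; omega)

lemma closure_even_bound (F : Finset ℕ) (hcl : ∀ v ∈ F, 5 ≤ v → v - 5 ∈ F) :
    F.card ≤ 2 * (F.filter (fun v => Even v)).card + 2 ∧
      2 * (F.filter (fun v => Even v)).card ≤ F.card + 3 := by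
  have hKsum : F.card = ∑ r ∈ Finset.range 5, (F.filter (fun v => v % 5 = r)).card :=
    Finset.card_eq_sum_card_fiberwise (fun v _ => Finset.mem_range.mpr (Nat.mod_lt v (by norm_num)))
  have hesum : (F.filter (fun v => Even v)).card
      = ∑ r ∈ Finset.range 5, ((F.filter (fun v => Even v)).filter (fun v => v % 5 = r)).card :=
    Finset.card_eq_sum_card_fiberwise (fun v _ => Finset.mem_range.mpr (Nat.mod_lt v (by norm_num)))
  have hswap : ∀ r, (F.filter (fun v => Even v)).filter (fun v => v % 5 = r)
      = (F.filter (fun v => v % 5 = r)).filter (fun v => Even v) := fun r => Finset.filter_comm _ _ _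
  have hper : ∀ r < 5, ((F.filter (fun v => v % 5 = r)).filter (fun v => Even v)).card
      = if r % 2 = 0 then ((F.filter (fun v => v % 5 = r)).card + 1)/2
        else (F.filter (fun v => v % 5 = r)).card / 2 := by
    intro r hr
    conv_lhs => rw [runner_eq F hcl r hr]
    exact filter_even_image_card _ r
  rw [hesum]
  simp only [hswap]
  rw [Finset.sum_range_succ, Finset.sum_range_succ, Finset.sum_range_succ,
      Finset.sum_range_succ, Finset.sum_range_one]
  rw [hper 0 (by norm_num), hper 1 (by norm_num), hper 2 (by norm_num),
      hper 3 (by norm_num), hper 4 (by norm_num)]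
  norm_num
  rw [hKsum]
  rw [Finset.sum_range_succ, Finset.sum_range_succ, Finset.sum_range_succ,
      Finset.sum_range_succ, Finset.sum_range_one]
  omega

lemma two_mul_cast (L : ℕ) : (2:ZMod 4) * (L:ℕ) = 2 * ((L % 2 : ℕ) : ZMod 4) := by
  have h : ((2*L : ℕ) : ZMod 4) = ((2*(L%2) : ℕ) : ZMod 4) :=
    (ZMod.natCast_eq_natCast_iff _ _ _).mpr (by unfold Nat.ModEq; omega)
  push_cast at h
  exact h

lemma P1 (a L : ℕ) : ((L % 2 : ℕ) : ZMod 4)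
    = (-1)^(a+1) * ((L % 2 : ℕ) : ZMod 4) + (if Even a then 2 * (L : ZMod 4) else 0) := by
  rcases Nat.even_or_odd a with h | h
  · rw [if_pos h, (by simp [h, parity_simps] : Odd (a+1)).neg_one_pow]
    rw [show ((L:ℕ):ZMod 4) = ((L:ℕ)) from rfl, two_mul_cast]
    ring
  · rw [if_neg (by simpa [Nat.not_even_iff_odd] using h),
      (by simp [h, parity_simps] : Even (a+1)).neg_one_pow]
    ring

lemma neg_one_pow_nat (n : ℕ) : (-1:ZMod 4)^n = if n % 2 = 0 then 1 else -1 := by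
  rcases Nat.even_or_odd n with h | h
  · rw [h.neg_one_pow, if_pos (Nat.even_iff.mp h)]
  · rw [h.neg_one_pow, if_neg (by rw [Nat.odd_iff] at h; omega)]

lemma P2 (a b : ℕ) : (if Even a then (2:ZMod 4) else 0) + (if Even b then (2:ZMod 4) else 0)
    = 1 - (-1)^(a+b) := by
  simp only [Nat.even_iff, neg_one_pow_nat]
  rcases Nat.mod_two_eq_zero_or_one a with ha | ha <;>
    rcases Nat.mod_two_eq_zero_or_one b with hb | hb <;>
      simp [ha, hb, Nat.add_mod] <;> decide

lemma P3 {K : ℕ} (hKe : Even K) (a L : ℕ) (haK : a ≤ K) :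
    (-1:ZMod 4)^(a+1) * ((L % 2 : ℕ) : ZMod 4)
      = (if Even (L + (K - a)) then 1 else 0) - (if Even a then 1 else 0) := by
  have hK2 : K % 2 = 0 := Nat.even_iff.mp hKe
  have hKa : (K - a) % 2 = a % 2 := by omega
  simp only [Nat.even_iff, neg_one_pow_nat]
  rcases Nat.mod_two_eq_zero_or_one a with ha | ha <;>
    rcases Nat.mod_two_eq_zero_or_one L with hL | hL <;>
      simp [ha, hL, Nat.add_mod, hKa] <;> decide

lemma IE1 (a L : ℕ) : ∑ b ∈ Finset.Icc 1 L, (-1:ZMod 4)^(a+b)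
    = (-1)^(a+1) * ((L % 2 : ℕ) : ZMod 4) := by
  induction L with
  | zero => simp
  | succ L ih =>
    rw [← Finset.insert_Icc_right_eq_Icc_add_one (by omega), Finset.sum_insert (by simp), ih]
    rcases Nat.even_or_odd L with h | h
    · rw [Nat.even_iff.mp h, show ((L+1)%2) = 1 by have := Nat.even_iff.mp h; omega]
      rw [show a + (L+1) = (a+1) + L by ring, pow_add, h.neg_one_pow]
      push_cast; ring
    · rw [Nat.odd_iff.mp h, show ((L+1)%2) = 0 by have := Nat.odd_iff.mp h; omega]
      rw [show a + (L+1) = (a+1) + L by ring, pow_add, h.neg_one_pow]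
      push_cast; ring

lemma count_even_Icc (t : ℕ) : ((Finset.Icc 1 (2*t)).filter (fun a => Even a)).card = t := by
  induction t with
  | zero => simp
  | succ t ih =>
    have h1 : Finset.Icc 1 (2*(t+1)) = insert (2*t+2) (insert (2*t+1) (Finset.Icc 1 (2*t))) := by
      ext a; simp only [Finset.mem_insert, Finset.mem_Icc]; omega
    rw [h1, Finset.filter_insert, Finset.filter_insert,
        if_pos (by simp [parity_simps]), if_neg (by simp [parity_simps])]
    rw [Finset.card_insert_of_notMem (by simp only [Finset.mem_filter, Finset.mem_Icc]; omega)]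
    omega

variable {N : ℕ} (π : N.Partition)

lemma partsList_coe : ((partsList π : List ℕ) : Multiset ℕ) = π.parts := by
  unfold partsList
  rw [Multiset.coe_eq_coe.mpr (List.reverse_perm _)]
  exact Multiset.sort_eq _ _

lemma partsList_sorted : (partsList π).Pairwise (· ≥ ·) := by
  unfold partsList
  exact List.pairwise_reverse.mpr
    ((Multiset.pairwise_sort π.parts (· ≤ ·)).imp (fun h => h))

lemma rowLen_eq_getD (a : ℕ) : rowLen π a = (partsList π).getD (a-1) 0 := rfl

lemma rowLen_anti {a a' : ℕ} (h1 : 1 ≤ a) (h : a ≤ a') : rowLen π a' ≤ rowLen π a := by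
  unfold rowLen
  set l := partsList π with hl
  by_cases h2 : a' - 1 < l.length
  · rw [List.getD_eq_getElem l 0 h2, List.getD_eq_getElem l 0 (lt_of_le_of_lt (by omega) h2)]
    rcases eq_or_lt_of_le (show a - 1 ≤ a' - 1 by omega) with he | hlt
    · simp [he]
    · exact (List.pairwise_iff_getElem.mp (partsList_sorted π)) _ _ _ h2 hlt
  · rw [List.getD_eq_default l 0 (by omega)]
    exact Nat.zero_le _

lemma parts_le {v : ℕ} (hv : v ∈ π.parts) : v ≤ N := by
  conv_rhs => rw [← π.parts_sum]
  exact Multiset.single_le_sum (fun x _ => Nat.zero_le x) v hv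

lemma rowLen_le (a : ℕ) : rowLen π a ≤ N := by
  unfold rowLen
  set l := partsList π with hl
  by_cases h2 : a - 1 < l.length
  · rw [List.getD_eq_getElem l 0 h2]
    apply parts_le π
    rw [← partsList_coe π]
    exact l.getElem_mem h2
  · rw [List.getD_eq_default l 0 (by omega)]; exact Nat.zero_le _

lemma card_parts_le : Multiset.card π.parts ≤ N := by
  calc Multiset.card π.parts = (π.parts.map (fun _ => 1)).sum := by simp
  _ ≤ (π.parts.map id).sum := Multiset.sum_map_le_sum_map _ _ (fun x hx => π.parts_pos hx)
  _ = N := by simp [π.parts_sum]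

lemma sum_rowLen {M : Type*} [AddCommMonoid M] (f : ℕ → M) (hf : f 0 = 0) {K : ℕ} (hK : N ≤ K) :
    ∑ a ∈ Finset.Icc 1 K, f (rowLen π a) = (π.parts.map f).sum := by
  have hlen : (partsList π).length = Multiset.card π.parts := by
    rw [← partsList_coe π]; rfl
  have hmN : Multiset.card π.parts ≤ N := card_parts_le π
  rw [← Finset.Ico_add_one_right_eq_Icc, Finset.sum_Ico_eq_sum_range]
  simp only [Nat.add_sub_cancel]
  have h1 : ∀ i, rowLen π (1 + i) = (partsList π).getD i 0 := by
    intro i; rw [rowLen_eq_getD]; congr 1; omega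
  simp only [h1]
  rw [← partsList_coe π]
  set l := partsList π with hldef
  have : ∀ (l : List ℕ) (K : ℕ), l.length ≤ K →
      ∑ i ∈ Finset.range K, f (l.getD i 0) = ((l : Multiset ℕ).map f).sum := by
    intro l
    induction l with
    | nil => intro K _; simp [List.getD, hf]
    | cons x xs ih =>
      intro K hK
      cases K with
      | zero => simp at hK
      | succ K =>
        rw [Finset.sum_range_succ' (fun i => f ((x :: xs).getD i 0)) K]
        simp only [List.getD_cons_succ, List.getD_cons_zero]
        rw [ih K (by simpa using hK)]
        simp [add_comm]
  exact this l K (by omega)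

lemma colLen_eq {b : ℕ} (hb : 1 ≤ b) {K : ℕ} (hK : N ≤ K) :
    colLen π b = ((Finset.Icc 1 K).filter (fun a => b ≤ rowLen π a)).card := by
  have := sum_rowLen π (fun v => if b ≤ v then (1:ℕ) else 0) (by simp; omega) hK
  rw [sum_ind_eq_card] at this
  rw [colLen, ← this, Finset.card_filter]

lemma colLen_le_N (b : ℕ) : colLen π b ≤ N := by
  calc colLen π b ≤ Multiset.card π.parts := Multiset.card_le_card (Multiset.filter_le _ _)
  _ ≤ N := card_parts_le π

lemma colLen_anti {b b' : ℕ} (h : b ≤ b') : colLen π b' ≤ colLen π b := by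
  apply Multiset.card_le_card
  apply Multiset.monotone_filter_right
  intro v hv; omega

lemma colLen_zero_of_gt {b : ℕ} (hb : N < b) : colLen π b = 0 := by
  rw [colLen, Multiset.card_eq_zero, Multiset.filter_eq_nil]
  intro v hv
  have := parts_le π hv; omega

lemma galois {a b K : ℕ} (ha : 1 ≤ a) (haK : a ≤ K) (hb : 1 ≤ b) (hK : N ≤ K) :
    b ≤ rowLen π a ↔ a ≤ colLen π b := by
  rw [colLen_eq π hb hK]
  constructor
  · intro h
    calc a = (Finset.Icc 1 a).card := by simp
    _ ≤ _ := Finset.card_le_card (by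
      intro t ht
      simp only [Finset.mem_Icc, Finset.mem_filter] at ht ⊢
      refine ⟨⟨ht.1, le_trans ht.2 haK⟩, le_trans h (rowLen_anti π ht.1 ht.2)⟩)
  · intro h
    by_contra hc
    push_neg at hc
    have hsub : (Finset.Icc 1 K).filter (fun t => b ≤ rowLen π t) ⊆ Finset.Icc 1 (a-1) := by
      intro t ht
      simp only [Finset.mem_Icc, Finset.mem_filter] at ht ⊢
      refine ⟨ht.1.1, ?_⟩
      by_contra htc
      have : a ≤ t := by omega
      have := rowLen_anti π ha this
      omega
    have := Finset.card_le_card hsub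
    simp only [Nat.card_Icc] at this
    omega

/-- The (padded) beta-set of a 5-core is closed under subtracting 5. -/
lemma core_closure (hcore : IsCore 5 π) {K : ℕ} (hK : N ≤ K) {v : ℕ}
    (hv : v ∈ (Finset.Icc 1 K).image (fun t => rowLen π t + (K - t))) (h5 : 5 ≤ v) :
    v - 5 ∈ (Finset.Icc 1 K).image (fun t => rowLen π t + (K - t)) := by
  obtain ⟨a, haI, hav⟩ := Finset.mem_image.mp hv
  simp only [Finset.mem_Icc] at haI
  have hanti : ∀ {t t' : ℕ}, 1 ≤ t → t < t' → t' ≤ K →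
      rowLen π t' + (K - t') < rowLen π t + (K - t) := by
    intro t t' h1 h2 h3
    have := rowLen_anti π h1 (le_of_lt h2)
    omega
  by_cases hzero : rowLen π a = 0
  · refine Finset.mem_image.mpr ⟨a + 5, ?_, ?_⟩
    · simp only [Finset.mem_Icc]; omega
    · have h5' : rowLen π (a+5) = 0 :=
        Nat.le_antisymm (hzero ▸ rowLen_anti π haI.1 (by omega)) (Nat.zero_le _)
      rw [h5']; omega
  · set F := (Finset.Icc 1 K).image (fun t => rowLen π t + (K - t)) with hFdef
    set L := rowLen π a with hLdef
    have hL1 : 1 ≤ L := by omega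
    have hLN : L ≤ N := rowLen_le π a
    have hvL : v = L + (K - a) := hav.symm
    by_contra hx
    have hFv : F.filter (· < v) = (Finset.Icc (a+1) K).image (fun t => rowLen π t + (K - t)) := by
      ext w
      simp only [Finset.mem_filter, hFdef, Finset.mem_image, Finset.mem_Icc]
      constructor
      · rintro ⟨⟨t, ht, htw⟩, hwv⟩
        refine ⟨t, ⟨?_, ht.2⟩, htw⟩
        by_contra htc
        have hta : t ≤ a := by omega
        rcases Nat.lt_or_ge t a with h' | h'
        · have := hanti ht.1 h' (by omega)
          omega
        · have : t = a := by omega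
          subst this; omega
      · rintro ⟨t, ht, htw⟩
        refine ⟨⟨t, ⟨by omega, ht.2⟩, htw⟩, ?_⟩
        have := hanti haI.1 (show a < t by omega) ht.2
        omega
    have hcard1 : (F.filter (· < v)).card = K - a := by
      have hinj2 : Set.InjOn (fun t => rowLen π t + (K - t)) (Finset.Icc (a+1) K) := by
        intro t ht t' ht' he
        simp only [Finset.mem_coe, Finset.mem_Icc] at ht ht'
        replace he : rowLen π t + (K - t) = rowLen π t' + (K - t') := he
        by_contra hne
        rcases Nat.lt_or_ge t t' with h' | h'
        · have := hanti (show 1 ≤ t by omega) h' ht'.2; omega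
        · have h'' : t' < t := by omega
          have := hanti (show 1 ≤ t' by omega) h'' ht.2; omega
      rw [hFv, Finset.card_image_of_injOn hinj2, Nat.card_Icc]
      omega
    set T := Finset.range v \ F with hTdef
    have hT : T = Finset.range v \ F.filter (· < v) := by
      ext w
      simp only [hTdef, Finset.mem_sdiff, Finset.mem_range, Finset.mem_filter]
      tauto
    have hcardT : T.card = L := by
      rw [hT, Finset.card_sdiff_of_subset (by intro w hw; simp only [Finset.mem_filter] at hw
                                              simp [hw.2]), hcard1, Finset.card_range]
      omega
    set y := fun b => b - 1 + (K - colLen π b) with hydef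
    have hyT : ∀ b ∈ Finset.Icc 1 L, y b ∈ T := by
      intro b hb
      simp only [Finset.mem_Icc] at hb
      have hacb : a ≤ colLen π b :=
        (galois π haI.1 haI.2 hb.1 hK).mp (by omega)
      have hcbK : colLen π b ≤ K := le_trans (colLen_le_N π b) hK
      simp only [hTdef, Finset.mem_sdiff, Finset.mem_range]
      constructor
      · simp only [hydef]; omega
      · intro hmem
        obtain ⟨t, htI, htv⟩ := Finset.mem_image.mp hmem
        simp only [Finset.mem_Icc] at htI
        simp only [hydef] at htv
        by_cases hcase : t ≤ colLen π b
        · have hbt : b ≤ rowLen π t := (galois π htI.1 htI.2 hb.1 hK).mpr hcase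
          omega
        · have hbt : ¬ (b ≤ rowLen π t) := by
            intro hc
            exact hcase ((galois π htI.1 htI.2 hb.1 hK).mp hc)
          omega
    have hyInj : Set.InjOn y (Finset.Icc 1 L) := by
      intro b hb b' hb' he
      simp only [Finset.mem_coe, Finset.mem_Icc] at hb hb'
      by_contra hne
      have key : ∀ {c c' : ℕ}, 1 ≤ c → c < c' → y c < y c' := by
        intro c c' h1 h2
        have := colLen_anti π (le_of_lt h2)
        have := le_trans (colLen_le_N π c) hK
        simp only [hydef]; omega
      rcases Nat.lt_or_ge b b' with h' | h'
      · have := key hb.1 h'; omega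
      · have := key hb'.1 (show b' < b by omega); omega
    have hST : (Finset.Icc 1 L).image y = T := by
      apply Finset.eq_of_subset_of_card_le
      · intro w hw
        obtain ⟨b, hb, hbw⟩ := Finset.mem_image.mp hw
        exact hbw ▸ hyT b hb
      · rw [hcardT, Finset.card_image_of_injOn hyInj, Nat.card_Icc]; omega
    have hxT : v - 5 ∈ T := by
      simp only [hTdef, Finset.mem_sdiff, Finset.mem_range]
      exact ⟨by omega, hx⟩
    rw [← hST] at hxT
    obtain ⟨b, hb, hbx⟩ := Finset.mem_image.mp hxT
    simp only [Finset.mem_Icc] at hb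
    have hacb : a ≤ colLen π b :=
      (galois π haI.1 haI.2 hb.1 hK).mp (by omega)
    have hcbK : colLen π b ≤ K := le_trans (colLen_le_N π b) hK
    apply hcore a b haI.1 hb.1 (by omega)
    rw [hookLen, ← hLdef]
    simp only [hydef] at hbx
    omega

lemma cell_exchange {K : ℕ} (hK : N ≤ K) (g : ℕ → ℕ → ZMod 4) :
    ∑ a ∈ Finset.Icc 1 K, ∑ b ∈ Finset.Icc 1 (rowLen π a), g a b
      = ∑ b ∈ Finset.Icc 1 K, ∑ a ∈ Finset.Icc 1 (colLen π b), g a b := by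
  have hrow : ∀ a, Finset.Icc 1 (rowLen π a) = (Finset.Icc 1 K).filter (fun b => b ≤ rowLen π a) := by
    intro a; ext b
    have := rowLen_le π a
    simp only [Finset.mem_Icc, Finset.mem_filter]
    omega
  have hcol : ∀ b, Finset.Icc 1 (colLen π b) = (Finset.Icc 1 K).filter (fun a => a ≤ colLen π b) := by
    intro b; ext a
    have := colLen_le_N π b
    simp only [Finset.mem_Icc, Finset.mem_filter]
    omega
  calc ∑ a ∈ Finset.Icc 1 K, ∑ b ∈ Finset.Icc 1 (rowLen π a), g a b
      = ∑ a ∈ Finset.Icc 1 K, ∑ b ∈ Finset.Icc 1 K, if b ≤ rowLen π a then g a b else 0 := by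
        apply Finset.sum_congr rfl; intro a _
        rw [hrow a, Finset.sum_filter]
  _ = ∑ b ∈ Finset.Icc 1 K, ∑ a ∈ Finset.Icc 1 K, if a ≤ colLen π b then g a b else 0 := by
        rw [Finset.sum_comm]
        apply Finset.sum_congr rfl; intro b hb
        apply Finset.sum_congr rfl; intro a ha
        simp only [Finset.mem_Icc] at ha hb
        have hg := galois π ha.1 ha.2 hb.1 hK
        by_cases h : b ≤ rowLen π a
        · rw [if_pos h, if_pos (hg.mp h)]
        · rw [if_neg h, if_neg (fun hc => h (hg.mpr hc))]
  _ = ∑ b ∈ Finset.Icc 1 K, ∑ a ∈ Finset.Icc 1 (colLen π b), g a b := by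
        apply Finset.sum_congr rfl; intro b _
        rw [hcol b, Finset.sum_filter]

lemma numOdd_eq {K : ℕ} (hK : N ≤ K) : numOdd π = ∑ a ∈ Finset.Icc 1 K, rowLen π a % 2 := by
  calc numOdd π = (π.parts.map (fun v => if Odd v then (1:ℕ) else 0)).sum :=
        (sum_ind_eq_card _ _).symm
  _ = (π.parts.map (fun v => v % 2)).sum := by
      congr 1
      apply Multiset.map_congr rfl
      intro v _
      rcases Nat.even_or_odd v with h | h
      · rw [if_neg (by rwa [Nat.not_odd_iff_even]), Nat.even_iff.mp h]
      · rw [if_pos h, Nat.odd_iff.mp h]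
  _ = _ := (sum_rowLen π (fun v => v % 2) (by norm_num) hK).symm

lemma numOddConj_eq {K : ℕ} (hK : N ≤ K) :
    numOddConj π = ∑ b ∈ Finset.Icc 1 K, colLen π b % 2 := by
  rw [numOddConj, Finset.card_filter]
  have step1 : ∑ b ∈ Finset.Icc 1 N, (if Odd (colLen π b) then (1:ℕ) else 0)
      = ∑ b ∈ Finset.Icc 1 N, colLen π b % 2 := by
    apply Finset.sum_congr rfl
    intro b _
    rcases Nat.even_or_odd (colLen π b) with h | h
    · rw [if_neg (by rwa [Nat.not_odd_iff_even]), Nat.even_iff.mp h]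
    · rw [if_pos h, Nat.odd_iff.mp h]
  rw [step1]
  apply Finset.sum_subset (Finset.Icc_subset_Icc_right hK)
  intro b hb hbn
  simp only [Finset.mem_Icc] at hb hbn
  rw [colLen_zero_of_gt π (show N < b by omega)]
  rfl

lemma sum_rowLen_eq_N {K : ℕ} (hK : N ≤ K) : ∑ a ∈ Finset.Icc 1 K, rowLen π a = N := by
  rw [sum_rowLen π (fun v => v) rfl hK]
  rw [Multiset.map_id']
  exact π.parts_sum

lemma srank_zmod {K : ℕ} (hK : N ≤ K) (hKe : Even K) :
    ((srank π : ℤ) : ZMod 4) = (N : ZMod 4)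
      - (((Finset.Icc 1 K).filter (fun a => Even (rowLen π a + (K - a)))).card : ZMod 4)
      + (((Finset.Icc 1 K).filter (fun a => Even a)).card : ZMod 4) := by
  have hsr : ((srank π : ℤ) : ZMod 4) = ((numOdd π : ℕ) : ZMod 4) - ((numOddConj π : ℕ) : ZMod 4) := by
    rw [srank]; push_cast; ring
  have hrowdec : ((numOdd π : ℕ) : ZMod 4)
      = (∑ a ∈ Finset.Icc 1 K, ∑ b ∈ Finset.Icc 1 (rowLen π a), (-1:ZMod 4)^(a+b))
        + ∑ a ∈ Finset.Icc 1 K, ∑ b ∈ Finset.Icc 1 (rowLen π a), (if Even a then (2:ZMod 4) else 0) := by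
    rw [numOdd_eq π hK, Nat.cast_sum, ← Finset.sum_add_distrib]
    apply Finset.sum_congr rfl
    intro a _
    rw [IE1, Finset.sum_const, Nat.card_Icc, Nat.add_sub_cancel, nsmul_eq_mul]
    have hp := P1 a (rowLen π a)
    by_cases h : Even a
    · rw [if_pos h] at hp ⊢; linear_combination hp
    · rw [if_neg h] at hp ⊢; linear_combination hp
  have hcoldec : ((numOddConj π : ℕ) : ZMod 4)
      = (∑ a ∈ Finset.Icc 1 K, ∑ b ∈ Finset.Icc 1 (rowLen π a), (-1:ZMod 4)^(a+b))
        + ∑ a ∈ Finset.Icc 1 K, ∑ b ∈ Finset.Icc 1 (rowLen π a), (if Even b then (2:ZMod 4) else 0) := by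
    rw [numOddConj_eq π hK, Nat.cast_sum,
        cell_exchange π hK (fun a b => (-1:ZMod 4)^(a+b)),
        cell_exchange π hK (fun a b => (if Even b then (2:ZMod 4) else 0)),
        ← Finset.sum_add_distrib]
    apply Finset.sum_congr rfl
    intro b _
    have h1 : ∑ a ∈ Finset.Icc 1 (colLen π b), (-1:ZMod 4)^(a+b)
        = (-1:ZMod 4)^(b+1) * ((colLen π b % 2 : ℕ) : ZMod 4) := by
      rw [← IE1 b (colLen π b)]
      apply Finset.sum_congr rfl; intro a _; rw [add_comm]
    rw [h1, Finset.sum_const, Nat.card_Icc, Nat.add_sub_cancel, nsmul_eq_mul]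
    have hp := P1 b (colLen π b)
    by_cases h : Even b
    · rw [if_pos h] at hp ⊢; linear_combination hp
    · rw [if_neg h] at hp ⊢; linear_combination hp
  rw [hsr, hrowdec, hcoldec]
  set I := Finset.Icc 1 K with hI
  set X := ∑ a ∈ I, ∑ b ∈ Finset.Icc 1 (rowLen π a), (-1:ZMod 4)^(a+b) with hX
  set A := ∑ a ∈ I, ∑ b ∈ Finset.Icc 1 (rowLen π a), (if Even a then (2:ZMod 4) else 0) with hA
  set B := ∑ a ∈ I, ∑ b ∈ Finset.Icc 1 (rowLen π a), (if Even b then (2:ZMod 4) else 0) with hB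
  have hBB : B + B = 0 := by
    rw [hB, ← Finset.sum_add_distrib]
    apply Finset.sum_eq_zero
    intro a _
    rw [← Finset.sum_add_distrib]
    apply Finset.sum_eq_zero
    intro b _
    by_cases h : Even b
    · rw [if_pos h]; decide
    · rw [if_neg h]; decide
  have hAB : A + B = (N : ZMod 4) - X := by
    calc A + B = ∑ a ∈ I, ∑ b ∈ Finset.Icc 1 (rowLen π a),
          ((if Even a then (2:ZMod 4) else 0) + (if Even b then (2:ZMod 4) else 0)) := by
          rw [hA, hB, ← Finset.sum_add_distrib]
          apply Finset.sum_congr rfl; intro a _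
          rw [← Finset.sum_add_distrib]
    _ = ∑ a ∈ I, ∑ b ∈ Finset.Icc 1 (rowLen π a), ((1:ZMod 4) - (-1:ZMod 4)^(a+b)) := by
          apply Finset.sum_congr rfl; intro a _
          apply Finset.sum_congr rfl; intro b _
          exact P2 a b
    _ = (∑ a ∈ I, ∑ b ∈ Finset.Icc 1 (rowLen π a), (1:ZMod 4)) - X := by
          rw [hX, ← Finset.sum_sub_distrib]
          apply Finset.sum_congr rfl; intro a _
          rw [← Finset.sum_sub_distrib]
    _ = (N : ZMod 4) - X := by
          congr 1
          calc ∑ a ∈ I, ∑ b ∈ Finset.Icc 1 (rowLen π a), (1:ZMod 4)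
              = ∑ a ∈ I, ((rowLen π a : ℕ) : ZMod 4) := by
                apply Finset.sum_congr rfl; intro a _
                rw [Finset.sum_const, Nat.card_Icc, Nat.add_sub_cancel, nsmul_eq_mul, mul_one]
          _ = (N : ZMod 4) := by rw [← Nat.cast_sum, sum_rowLen_eq_N π hK]
  have hcf1 : (((I.filter (fun a => Even (rowLen π a + (K - a)))).card : ℕ) : ZMod 4)
      = ∑ a ∈ I, (if Even (rowLen π a + (K - a)) then (1:ZMod 4) else 0) := by
    rw [Finset.card_filter, Nat.cast_sum]
    apply Finset.sum_congr rfl; intro a _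
    by_cases h : Even (rowLen π a + (K - a))
    · rw [if_pos h, if_pos h]; rfl
    · rw [if_neg h, if_neg h]; rfl
  have hcf2 : (((I.filter (fun a => Even a)).card : ℕ) : ZMod 4)
      = ∑ a ∈ I, (if Even a then (1:ZMod 4) else 0) := by
    rw [Finset.card_filter, Nat.cast_sum]
    apply Finset.sum_congr rfl; intro a _
    by_cases h : Even a
    · rw [if_pos h, if_pos h]; rfl
    · rw [if_neg h, if_neg h]; rfl
  have hXval : X = ((I.filter (fun a => Even (rowLen π a + (K - a)))).card : ZMod 4)
      - ((I.filter (fun a => Even a)).card : ZMod 4) := by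
    rw [hcf1, hcf2]
    calc X = ∑ a ∈ I, (-1:ZMod 4)^(a+1) * ((rowLen π a % 2 : ℕ) : ZMod 4) := by
          rw [hX]; exact Finset.sum_congr rfl fun a _ => IE1 a _
    _ = ∑ a ∈ I, ((if Even (rowLen π a + (K - a)) then (1:ZMod 4) else 0)
          - (if Even a then (1:ZMod 4) else 0)) := by
          apply Finset.sum_congr rfl; intro a ha
          rw [hI, Finset.mem_Icc] at ha
          exact P3 hKe a (rowLen π a) ha.2
    _ = _ := Finset.sum_sub_distrib _ _
  have hmB : -B = B := neg_eq_of_add_eq_zero_left hBB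
  calc X + A - (X + B) = A + B + (-B + -B) := by ring
  _ = A + B := by rw [hmB, hBB, add_zero]
  _ = (N : ZMod 4) - X := hAB
  _ = _ := by rw [hXval]; ring

end SrankHelpers

/-- `a_{5,0}(4n+2) = 0`. -/
theorem fivecore_srank_zero_mod_four_two (n : ℕ) : a5srank 0 (4 * n + 2) = 0 := by
  rw [a5srank, Finset.card_eq_zero, Finset.filter_eq_empty_iff]
  intro π _
  rintro ⟨hcore, hsr⟩
  set K := 2 * (4*n+2) + 2 with hKdef
  have hK : (4*n+2) ≤ K := by omega
  have hKe : Even K := ⟨4*n+3, by omega⟩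
  have hsz := srank_zmod π hK hKe
  set F := (Finset.Icc 1 K).image (fun t => rowLen π t + (K - t)) with hF
  have hcl : ∀ v ∈ F, 5 ≤ v → v - 5 ∈ F := fun v hv h5 => core_closure π hcore hK hv h5
  have hbound := closure_even_bound F hcl
  have hinj : Set.InjOn (fun t => rowLen π t + (K - t)) (Finset.Icc 1 K) := by
    intro t ht t' ht' he
    simp only [Finset.mem_coe, Finset.mem_Icc] at ht ht'
    replace he : rowLen π t + (K - t) = rowLen π t' + (K - t') := he
    by_contra hne
    rcases Nat.lt_or_ge t t' with h' | h'
    · have := rowLen_anti π ht.1 (le_of_lt h'); omega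
    · have h'' : t' < t := by omega
      have := rowLen_anti π ht'.1 (le_of_lt h''); omega
  have hcardF : F.card = K := by
    rw [hF, Finset.card_image_of_injOn hinj, Nat.card_Icc]
    omega
  have hEF : (F.filter (fun v => Even v)).card
      = ((Finset.Icc 1 K).filter (fun a => Even (rowLen π a + (K - a)))).card := by
    rw [hF, Finset.filter_image]
    exact Finset.card_image_of_injOn (hinj.mono (by
      intro t ht
      exact Finset.mem_coe.mpr (Finset.filter_subset _ _ (Finset.mem_coe.mp ht))))
  rw [hcardF, hEF] at hbound
  have hs' : ((Finset.Icc 1 K).filter (fun a => Even a)).card = 4*n+3 := by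
    rw [hKdef, show 2*(4*n+2)+2 = 2*(4*n+3) by ring]
    exact count_even_Icc _
  have hsr0 : ((srank π : ℤ) : ZMod 4) = 0 := by
    rw [ZMod.intCast_zmod_eq_zero_iff_dvd]
    exact Int.dvd_of_emod_eq_zero hsr
  have hN4 : ((4*n+2 : ℕ) : ZMod 4) = 2 := by
    push_cast
    rw [show ((4:ZMod 4)) = 0 by decide]
    ring
  rw [hsr0, hs', hN4] at hsz
  set e := ((Finset.Icc 1 K).filter (fun a => Even (rowLen π a + (K - a)))).card with he
  have hecase : e = 4*n+2 ∨ e = 4*n+3 ∨ e = 4*n+4 := by omega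
  have h43 : ((4*n+3 : ℕ) : ZMod 4) = 3 := by
    push_cast
    rw [show ((4:ZMod 4)) = 0 by decide]
    ring
  have h44 : ((4*n+4 : ℕ) : ZMod 4) = 0 := by
    push_cast
    rw [show ((4:ZMod 4)) = 0 by decide]
    ring
  rcases hecase with h | h | h
  · rw [h, hN4, h43] at hsz
    exact absurd hsz (by decide)
  · rw [h, h43] at hsz
    exact absurd hsz (by decide)
  · rw [h, h44, h43] at hsz
    exact absurd hsz (by decide)

end AndrewsStanley
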